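/- Consider system (3.1) with all parameters positive, c₁q₁ − a₁μ₁ > 0, and y^b = μ₁/(c₁q₁ − a₁μ₁). If 0 < y^b < K, then there exist x₁ > 0 and y₁ > 0 such that r(1 − x₁/K) − q₁y₁/(1 + a₁x₁) = 0 and c₁q₁x₁/(1 + a₁x₁) − μ₁ − m₁y₁ = 0; that is, (x₁, y₁, 0) is an equilibrium of (3.1). Moreover, if (K − 1/a₁)/2 ≤ y^b < K, then this pair (x₁, y₁) is unique. -/

import Mathlib

set_option maxHeartbeats 1000000

/-- Key monotonicity lemma: under the condition `a₁K - 1 ≤ 2a₁yb`, the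
auxiliary polynomial cannot vanish at two points `> yb`. -/
lemma aux_key6 (r K q₁ a₁ c₁ μ₁ m₁ yb : ℝ)
    (hr : 0 < r) (hK : 0 < K) (hq₁ : 0 < q₁) (ha₁ : 0 < a₁)
    (hc₁ : 0 < c₁) (hm₁ : 0 < m₁) (h0 : 0 < yb)
    (hc : a₁ * K - 1 ≤ 2 * a₁ * yb) (s t : ℝ) (hs : yb < s) (hst : s < t)
    (Es : r * (K - s) * (1 + a₁ * s) ^ 2 * m₁
        - K * q₁ * (c₁ * q₁ * s - μ₁ * (1 + a₁ * s)) = 0)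
    (Et : r * (K - t) * (1 + a₁ * t) ^ 2 * m₁
        - K * q₁ * (c₁ * q₁ * t - μ₁ * (1 + a₁ * t)) = 0) : False := by
  have hds : 0 < 1 + a₁ * s := by nlinarith
  have hdt : 0 < 1 + a₁ * t := by nlinarith
  have key1 : (r * (K - s) * (1 + a₁ * s) * m₁
      - r * (K - t) * (1 + a₁ * t) * m₁) * ((1 + a₁ * s) * (1 + a₁ * t))
      = K * c₁ * q₁ ^ 2 * (s - t) := by
    linear_combination (1 + a₁ * t) * Es - (1 + a₁ * s) * Et
  have h2 : 0 < a₁ * (s + t) + 1 - a₁ * K := by nlinarith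
  have h3 : r * (K - s) * (1 + a₁ * s) * m₁
      - r * (K - t) * (1 + a₁ * t) * m₁
      = r * m₁ * ((t - s) * (a₁ * (s + t) + 1 - a₁ * K)) := by ring
  have hA : 0 < r * (K - s) * (1 + a₁ * s) * m₁
      - r * (K - t) * (1 + a₁ * t) * m₁ := by
    rw [h3]
    exact mul_pos (mul_pos hr hm₁) (mul_pos (by linarith) h2)
  have hpos := mul_pos hA (mul_pos hds hdt)
  rw [key1] at hpos
  nlinarith [mul_pos (mul_pos hK hc₁) (mul_pos hq₁ hq₁)]

/-- Proposition 3.3 (for the consumer `y`): existence, and conditional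
uniqueness, of boundary equilibria `E₁ = (x₁, y₁, 0)` of system (3.1). -/
theorem statement6
    (r K q₁ q₂ a₁ a₂ c₁ c₂ μ₁ μ₂ m₁ m₂ : ℝ)
    (hr : 0 < r) (hK : 0 < K) (hq₁ : 0 < q₁) (hq₂ : 0 < q₂)
    (ha₁ : 0 < a₁) (ha₂ : 0 < a₂) (hc₁ : 0 < c₁) (hc₂ : 0 < c₂)
    (hμ₁ : 0 < μ₁) (hμ₂ : 0 < μ₂) (hm₁ : 0 < m₁) (hm₂ : 0 < m₂)
    (hden₁ : 0 < c₁ * q₁ - a₁ * μ₁)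
    (yb : ℝ) (hyb : yb = μ₁ / (c₁ * q₁ - a₁ * μ₁))
    (h0 : 0 < yb) (h1 : yb < K) :
    (∃ x₁ > (0:ℝ), ∃ y₁ > (0:ℝ),
      r * (1 - x₁ / K) - q₁ * y₁ / (1 + a₁ * x₁) = 0 ∧
      c₁ * q₁ * x₁ / (1 + a₁ * x₁) - μ₁ - m₁ * y₁ = 0) ∧
    ((K - 1 / a₁) / 2 ≤ yb →
      ∃! p : ℝ × ℝ, 0 < p.1 ∧ 0 < p.2 ∧
        r * (1 - p.1 / K) - q₁ * p.2 / (1 + a₁ * p.1) = 0 ∧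
        c₁ * q₁ * p.1 / (1 + a₁ * p.1) - μ₁ - m₁ * p.2 = 0) := by
  have hybc : yb * (c₁ * q₁ - a₁ * μ₁) = μ₁ := by
    rw [hyb]; field_simp; exact div_self (ne_of_gt (by linarith))
  set f : ℝ → ℝ := fun x => r * (K - x) * (1 + a₁ * x) ^ 2 * m₁
      - K * q₁ * (c₁ * q₁ * x - μ₁ * (1 + a₁ * x)) with hf
  -- value at yb
  have e0 : c₁ * q₁ * yb - μ₁ * (1 + a₁ * yb) = 0 := by linear_combination hybc
  have h1yb : 0 < 1 + a₁ * yb := by nlinarith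
  have hfyb : 0 < f yb := by
    have hq0 : K * q₁ * (c₁ * q₁ * yb - μ₁ * (1 + a₁ * yb)) = 0 := by
      rw [e0]; ring
    have : 0 < r * (K - yb) * (1 + a₁ * yb) ^ 2 * m₁ := by
      have : 0 < K - yb := by linarith
      positivity
    simp only [hf]
    linarith
  -- value at K
  have hfK : f K < 0 := by
    have eK : c₁ * q₁ * K - μ₁ * (1 + a₁ * K)
        = (c₁ * q₁ - a₁ * μ₁) * (K - yb) := by linear_combination hybc
    have hpos : 0 < (c₁ * q₁ - a₁ * μ₁) * (K - yb) :=
      mul_pos hden₁ (by linarith)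
    have hz : r * (K - K) * (1 + a₁ * K) ^ 2 * m₁ = 0 := by ring
    simp only [hf]
    rw [hz, eK]
    nlinarith [mul_pos (mul_pos hK hq₁) hpos]
  -- IVT
  have hcont : ContinuousOn f (Set.Icc yb K) := by
    apply Continuous.continuousOn; fun_prop
  have hmem : (0 : ℝ) ∈ Set.Icc (f K) (f yb) := ⟨hfK.le, hfyb.le⟩
  obtain ⟨x₁, hx₁mem, hx₁eq⟩ := intermediate_value_Icc' h1.le hcont hmem
  have hxgt : yb < x₁ := lt_of_le_of_ne hx₁mem.1 (by
    rintro rfl; exact hfyb.ne' hx₁eq)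
  have hxlt : x₁ < K := lt_of_le_of_ne hx₁mem.2 (by
    rintro rfl; exact hfK.ne hx₁eq)
  have hx₁pos : 0 < x₁ := h0.trans hxgt
  have hdx : 0 < 1 + a₁ * x₁ := by nlinarith
  have hN : 0 < c₁ * q₁ * x₁ - μ₁ * (1 + a₁ * x₁) := by
    have := mul_pos hden₁ (sub_pos.2 hxgt)
    nlinarith [hybc]
  set y₁ : ℝ := (c₁ * q₁ * x₁ - μ₁ * (1 + a₁ * x₁)) / ((1 + a₁ * x₁) * m₁) with hy₁
  have hy₁pos : 0 < y₁ := div_pos hN (mul_pos hdx hm₁)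
  have heq2 : c₁ * q₁ * x₁ / (1 + a₁ * x₁) - μ₁ - m₁ * y₁ = 0 := by
    rw [hy₁]; field_simp; ring
  have hfx : r * (K - x₁) * (1 + a₁ * x₁) ^ 2 * m₁
      - K * q₁ * (c₁ * q₁ * x₁ - μ₁ * (1 + a₁ * x₁)) = 0 := hx₁eq
  have heq1 : r * (1 - x₁ / K) - q₁ * y₁ / (1 + a₁ * x₁) = 0 := by
    rw [hy₁]
    field_simp
    linear_combination hfx
  refine ⟨⟨x₁, hx₁pos, y₁, hy₁pos, heq1, heq2⟩, fun hcond => ?_⟩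
  have ha1 : a₁ * (1 / a₁) = 1 := mul_one_div_cancel ha₁.ne'
  have hcc : a₁ * K - 1 ≤ 2 * a₁ * yb := by
    have h5 : K - 1 / a₁ ≤ 2 * yb := by linarith
    have h6 := mul_le_mul_of_nonneg_left h5 ha₁.le
    have h7 : a₁ * K - 1 = a₁ * (K - 1 / a₁) := by rw [mul_sub, ha1]
    nlinarith [h6]
  refine ⟨(x₁, y₁), ⟨hx₁pos, hy₁pos, heq1, heq2⟩, ?_⟩
  rintro ⟨x, y⟩ ⟨hx, hy, e1, e2⟩
  simp only at hx hy e1 e2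
  have hdxx : 0 < 1 + a₁ * x := by nlinarith
  have e2' : c₁ * q₁ * x - μ₁ * (1 + a₁ * x) = m₁ * y * (1 + a₁ * x) := by
    have h8 : (c₁ * q₁ * x / (1 + a₁ * x) - μ₁ - m₁ * y) * (1 + a₁ * x) = 0 := by
      rw [e2]; ring
    have h9 : c₁ * q₁ * x / (1 + a₁ * x) * (1 + a₁ * x) = c₁ * q₁ * x := by
      field_simp
    linear_combination h8 - h9
  have e1' : r * (1 - x / K) * (1 + a₁ * x) = q₁ * y := by
    have h8 : (r * (1 - x / K) - q₁ * y / (1 + a₁ * x)) * (1 + a₁ * x) = 0 := by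
      rw [e1]; ring
    have h9 : q₁ * y / (1 + a₁ * x) * (1 + a₁ * x) = q₁ * y := by
      field_simp
    linear_combination h8 + h9
  have e1'' : r * (K - x) * (1 + a₁ * x) = K * q₁ * y := by
    have h12 : K * (x / K) = x := by field_simp
    linear_combination K * e1' + r * (1 + a₁ * x) * h12
  -- x > yb
  have hxgt' : yb < x := by
    by_contra hle
    push_neg at hle
    have h4 : 0 < (c₁ * q₁ - a₁ * μ₁) * (x - yb) := by
      nlinarith [mul_pos (mul_pos hm₁ hy) hdxx, hybc]
    nlinarith [mul_nonpos_of_nonneg_of_nonpos hden₁.le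
      (by linarith : x - yb ≤ 0)]
  -- f x = 0
  have hfx' : r * (K - x) * (1 + a₁ * x) ^ 2 * m₁
      - K * q₁ * (c₁ * q₁ * x - μ₁ * (1 + a₁ * x)) = 0 := by
    calc r * (K - x) * (1 + a₁ * x) ^ 2 * m₁
        - K * q₁ * (c₁ * q₁ * x - μ₁ * (1 + a₁ * x))
        = (r * (K - x) * (1 + a₁ * x)) * (1 + a₁ * x) * m₁
          - K * q₁ * (c₁ * q₁ * x - μ₁ * (1 + a₁ * x)) := by ring
      _ = K * q₁ * y * (1 + a₁ * x) * m₁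
          - K * q₁ * (m₁ * y * (1 + a₁ * x)) := by rw [e1'', e2']
      _ = 0 := by ring
  -- x = x₁ by the key lemma
  have hxx : x = x₁ := by
    rcases lt_trichotomy x x₁ with h | h | h
    · exact (aux_key6 r K q₁ a₁ c₁ μ₁ m₁ yb hr hK hq₁ ha₁ hc₁ hm₁ h0
        hcc x x₁ hxgt' h hfx' hfx).elim
    · exact h
    · exact (aux_key6 r K q₁ a₁ c₁ μ₁ m₁ yb hr hK hq₁ ha₁ hc₁ hm₁ h0
        hcc x₁ x hxgt h hfx hfx').elim
  subst hxx
  have hyy : y = y₁ := by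
    have : m₁ * y = m₁ * y₁ := by linarith [e2, heq2]
    exact mul_left_cancel₀ hm₁.ne' this
  simp [hyy]
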